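/- Let n ≥ 1 be an integer, and let F : (0,∞) → R be defined by F(t) = (n/(n+4))·B_n^{−4/n}·k^{(n+4)/n}·t^{−4/n} + (1/(3(n+4)η²))·k^{(n+2)/n}·B_n^{−2/n}·t^{(2n−2)/n} + ((n+2)²/(72n(n+4)²η⁴))·k·t⁴, where k ≥ 1 is an integer, V > 0, and η ≥ (2π)^{−n}·B_n^{−1/n}·V^{(n+1)/n}. Then F is non-increasing on the interval (0, (2π)^{−n}·V]. -/

import Mathlib

open Real MeasureTheory Set

lemma antitoneAux (A C D p q T : ℝ)
    (key : ∀ t : ℝ, 0 < t → t < T →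
      A * (p * t ^ (p - 1)) + C * (q * t ^ (q - 1)) + D * (4 * t ^ 3) ≤ 0) :
    AntitoneOn (fun t : ℝ => A * t ^ p + C * t ^ q + D * t ^ (4 : ℕ)) (Ioc 0 T) := by
  apply antitoneOn_of_hasDerivWithinAt_nonpos (convex_Ioc 0 T)
    (f' := fun t => A * (p * t ^ (p - 1)) + C * (q * t ^ (q - 1)) + D * (4 * t ^ 3))
  · intro t ht
    have ht0 : t ≠ 0 := ne_of_gt ht.1
    have hca : ContinuousAt (fun t : ℝ => A * t ^ p + C * t ^ q + D * t ^ (4 : ℕ)) t :=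
      (((Real.continuousAt_rpow_const t p (Or.inl ht0)).const_mul A).add
        ((Real.continuousAt_rpow_const t q (Or.inl ht0)).const_mul C)).add
        ((continuousAt_pow t 4).const_mul D)
    exact hca.continuousWithinAt
  · intro t ht
    rw [interior_Ioc] at ht
    have ht0 : t ≠ 0 := ne_of_gt ht.1
    have h1 : HasDerivAt (fun x : ℝ => A * x ^ p) (A * (p * t ^ (p - 1))) t :=
      (Real.hasDerivAt_rpow_const (Or.inl ht0)).const_mul A
    have h2 : HasDerivAt (fun x : ℝ => C * x ^ q) (C * (q * t ^ (q - 1))) t :=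
      (Real.hasDerivAt_rpow_const (Or.inl ht0)).const_mul C
    have h3 : HasDerivAt (fun x : ℝ => D * x ^ (4 : ℕ)) (D * (4 * t ^ 3)) t := by
      have h := (hasDerivAt_pow 4 t).const_mul D
      rw [show D * (4 * t ^ 3) = D * (((4:ℕ):ℝ) * t ^ (4 - 1)) by norm_num]
      exact h
    exact (((h1.add h2).add h3).hasDerivWithinAt)
  · intro t ht
    rw [interior_Ioc] at ht
    exact key t ht.1 ht.2

lemma Tpow (n m : ℕ) (hn0 : (0:ℝ) < n) (B V π2 : ℝ) (hB0 : 0 < B) (hV : 0 < V) (hc0 : 0 < π2) :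
    (π2 ^ (-(n:ℝ)) * V) ^ (((m:ℝ)*(n:ℝ)+m)/n) =
      (π2 ^ (-(n:ℝ)) * B ^ (-(1:ℝ)/n) * V ^ (((n:ℝ)+1)/n)) ^ m * B ^ ((m:ℝ)/n)
        * (π2 ^ m)⁻¹ := by
  have h1 : (0:ℝ) < π2 ^ (-(n:ℝ)) * V := by positivity
  apply Real.log_injOn_pos (Set.mem_Ioi.2 (by positivity)) (Set.mem_Ioi.2 (by positivity))
  rw [Real.log_rpow h1, Real.log_mul (ne_of_gt (by positivity)) hV.ne',
    Real.log_mul (ne_of_gt (by positivity)) (ne_of_gt (by positivity)),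
    Real.log_mul (ne_of_gt (by positivity)) (ne_of_gt (by positivity)),
    Real.log_pow, Real.log_inv, Real.log_pow,
    Real.log_mul (ne_of_gt (by positivity)) (ne_of_gt (by positivity)),
    Real.log_mul (ne_of_gt (by positivity)) (ne_of_gt (by positivity)),
    Real.log_rpow hc0, Real.log_rpow hB0, Real.log_rpow hB0, Real.log_rpow hV]
  field_simp
  ring

lemma numeric (x c K2 K4 b kk : ℝ) (hx : 1 ≤ x) (hc : 6 ≤ c) (hK2 : 1 ≤ K2) (hK : K2 ≤ K4)
    (hb0 : 0 < b) (hb : b ≤ 16) (hkk : 1 ≤ kk) :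
    (2*x-2)/x * (kk * K2) / (3*(x+4)*c^(2:ℕ)) + ((x+2)^(2:ℕ)/(18*x*(x+4)^(2:ℕ)*c^(4:ℕ))) * (kk * b)
      ≤ (x/(x+4)) * b⁻¹ * (kk*K4) * (4/x) := by
  have hx0 : (0:ℝ) < x := by linarith
  have hc0 : (0:ℝ) < c := by linarith
  have hK40 : (1:ℝ) ≤ K4 := le_trans hK2 hK
  have hkk0 : (0:ℝ) < kk := by linarith
  have hc2 : (36:ℝ) ≤ c^(2:ℕ) := by nlinarith
  have hc4 : (1296:ℝ) ≤ c^(4:ℕ) := by nlinarith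
  have hrhs : kk*K4/(4*(x+4)) ≤ (x/(x+4)) * b⁻¹ * (kk*K4) * (4/x) := by
    have hb' : (16:ℝ)⁻¹ ≤ b⁻¹ := inv_anti₀ hb0 hb
    have : (x/(x+4)) * b⁻¹ * (kk*K4) * (4/x) = b⁻¹ * (4 * (kk*K4) / (x+4)) := by
      field_simp
    rw [this]
    calc kk*K4/(4*(x+4)) = (16:ℝ)⁻¹ * (4 * (kk*K4)/(x+4)) := by
          field_simp
          ring
      _ ≤ b⁻¹ * (4 * (kk*K4)/(x+4)) := by
          apply mul_le_mul_of_nonneg_right hb'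
          positivity
  have h1 : (2*x-2)/x * (kk * K2) / (3*(x+4)*c^(2:ℕ)) ≤ kk*K4/(8*(x+4)) := by
    have e : (2*x-2)/x * (kk * K2) / (3*(x+4)*c^(2:ℕ))
        = (2*x-2) * (kk * K2) / (x * (3*(x+4)*c^(2:ℕ))) := by
      field_simp
    rw [e, div_le_div_iff₀ (by positivity) (by positivity)]
    have hKk : kk * K2 ≤ kk * K4 := by nlinarith
    have ha : (2*x-2) * (8*(x+4)) ≤ 16*(x*(x+4)) := by nlinarith
    have hstep : (2*x-2) * (8*(x+4)) * (kk*K2) ≤ 16*(x*(x+4)) * (kk*K4) :=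
      mul_le_mul ha hKk (by positivity) (by positivity)
    have hcc : 16*(x*(x+4))*(kk*K4) ≤ kk*K4*(x*(3*(x+4)*c^(2:ℕ))) := by
      nlinarith [mul_le_mul_of_nonneg_left hc2
        (show (0:ℝ) ≤ 3*x*(x+4)*(kk*K4) by positivity),
        mul_nonneg (mul_nonneg (mul_nonneg hx0.le (show (0:ℝ) ≤ x+4 by linarith)) hkk0.le)
          (show (0:ℝ) ≤ K4 by linarith)]
    calc (2*x-2) * (kk*K2) * (8*(x+4)) = (2*x-2) * (8*(x+4)) * (kk*K2) := by ring
      _ ≤ 16*(x*(x+4)) * (kk*K4) := hstep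
      _ ≤ kk*K4*(x*(3*(x+4)*c^(2:ℕ))) := hcc
  have h2 : ((x+2)^(2:ℕ)/(18*x*(x+4)^(2:ℕ)*c^(4:ℕ))) * (kk * b) ≤ kk*K4/(8*(x+4)) := by
    have e : ((x+2)^(2:ℕ)/(18*x*(x+4)^(2:ℕ)*c^(4:ℕ))) * (kk * b)
        = (x+2)^(2:ℕ) * (kk*b) / (18*x*(x+4)^(2:ℕ)*c^(4:ℕ)) := by ring
    rw [e, div_le_div_iff₀ (by positivity) (by positivity)]
    have hbb : kk * b ≤ kk * 16 := by nlinarith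
    have h5 : (5:ℝ) ≤ x*(x+4) := by nlinarith
    have h95 : (x+2)^(2:ℕ) ≤ (9/5) * (x*(x+4)) := by nlinarith
    have ha : (x+2)^(2:ℕ) * (kk*b) ≤ ((9/5)*(x*(x+4))) * (kk*16) :=
      mul_le_mul h95 hbb (by positivity) (by positivity)
    have hstep : (x+2)^(2:ℕ) * (kk*b) * (8*(x+4)) ≤ ((9/5)*(x*(x+4))) * (kk*16) * (8*(x+4)) :=
      mul_le_mul_of_nonneg_right ha (by positivity)
    have hb1 : 18*x*(x+4)^(2:ℕ)*1296 * 1 ≤ 18*x*(x+4)^(2:ℕ)*c^(4:ℕ) * K4 :=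
      mul_le_mul (mul_le_mul_of_nonneg_left hc4 (by positivity)) hK40 (by norm_num) (by positivity)
    calc (x+2)^(2:ℕ) * (kk*b) * (8*(x+4)) ≤ ((9/5)*(x*(x+4))) * (kk*16) * (8*(x+4)) := hstep
      _ ≤ kk * (18*x*(x+4)^(2:ℕ)*1296 * 1) := by
          nlinarith [show (0:ℝ) ≤ kk*(x*(x+4)^(2:ℕ)) by positivity]
      _ ≤ kk * (18*x*(x+4)^(2:ℕ)*c^(4:ℕ) * K4) := mul_le_mul_of_nonneg_left hb1 hkk0.le
      _ = kk*K4*(18*x*(x+4)^(2:ℕ)*c^(4:ℕ)) := by ring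
  calc _ ≤ kk*K4/(8*(x+4)) + kk*K4/(8*(x+4)) := add_le_add h1 h2
    _ = kk*K4/(4*(x+4)) := by
        field_simp
        ring
    _ ≤ _ := hrhs

lemma ballVol_pos_le (n : ℕ) (hn : 1 ≤ n) :
    0 < ((volume (Metric.ball (0 : EuclideanSpace ℝ (Fin n)) 1)).toReal) ∧
    ((volume (Metric.ball (0 : EuclideanSpace ℝ (Fin n)) 1)).toReal) ≤ 2 ^ n := by
  constructor
  · apply ENNReal.toReal_pos
    · exact (Metric.measure_ball_pos volume _ one_pos).ne'
    · exact (measure_ball_lt_top).ne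
  · have hsub : Metric.ball (0 : EuclideanSpace ℝ (Fin n)) 1 ⊆
        ((MeasurableEquiv.toLp 2 (Fin n → ℝ)).symm) ⁻¹' (Set.pi Set.univ fun _ => Icc (-1:ℝ) 1) := by
      intro x hx
      have hx' : ‖x‖ < 1 := by simpa using hx
      intro i _
      have h1 : ‖x i‖ ≤ ‖x‖ := by
        rw [EuclideanSpace.norm_eq]
        have : ‖x i‖ ^ 2 ≤ ∑ j, ‖x j‖ ^ 2 :=
          Finset.single_le_sum (f := fun j => ‖x j‖ ^ 2) (fun j _ => by positivity)
            (Finset.mem_univ i)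
        calc ‖x i‖ = Real.sqrt (‖x i‖ ^ 2) := by rw [Real.sqrt_sq (norm_nonneg _)]
          _ ≤ _ := Real.sqrt_le_sqrt this
      have : |x i| ≤ 1 := by
        have := h1.trans hx'.le
        simpa [Real.norm_eq_abs] using this
      simp [MeasurableEquiv.coe_toLp_symm]
      exact abs_le.1 this
    have hcube : volume (((MeasurableEquiv.toLp 2 (Fin n → ℝ)).symm) ⁻¹'
        (Set.pi Set.univ fun _ => Icc (-1:ℝ) 1)) = ENNReal.ofReal 2 ^ n := by
      rw [(EuclideanSpace.volume_preserving_symm_measurableEquiv_toLp (Fin n)).measure_preimage_equiv _]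
      rw [volume_pi_pi]
      simp [Real.volume_Icc]
      norm_num
    have hle : volume (Metric.ball (0 : EuclideanSpace ℝ (Fin n)) 1) ≤
        volume (((MeasurableEquiv.toLp 2 (Fin n → ℝ)).symm) ⁻¹'
          (Set.pi Set.univ fun _ => Icc (-1:ℝ) 1)) := measure_mono hsub
    rw [hcube] at hle
    calc (volume (Metric.ball (0 : EuclideanSpace ℝ (Fin n)) 1)).toReal
        ≤ (ENNReal.ofReal 2 ^ n).toReal := ENNReal.toReal_mono (by simp) hle
      _ = 2 ^ n := by simp [ENNReal.toReal_pow]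

theorem stmt_15 (n k : ℕ) (hn : 1 ≤ n) (hk : 1 ≤ k) (V η : ℝ) (hV : 0 < V)
    (B : ℝ)
    (hB : B = (volume (Metric.ball (0 : EuclideanSpace ℝ (Fin n)) 1)).toReal)
    (hη : (2 * π) ^ (-(n : ℝ)) * B ^ (-(1 : ℝ) / n) * V ^ (((n : ℝ) + 1) / n) ≤ η) :
    AntitoneOn (fun t : ℝ =>
        (n / ((n : ℝ) + 4)) * B ^ (-(4 : ℝ) / n) * (k : ℝ) ^ (((n : ℝ) + 4) / n) * t ^ (-(4 : ℝ) / n)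
          + (1 / (3 * ((n : ℝ) + 4) * η ^ (2 : ℕ))) * (k : ℝ) ^ (((n : ℝ) + 2) / n)
              * B ^ (-(2 : ℝ) / n) * t ^ ((2 * (n : ℝ) - 2) / n)
          + (((n : ℝ) + 2) ^ (2 : ℕ) / (72 * n * ((n : ℝ) + 4) ^ (2 : ℕ) * η ^ (4 : ℕ)))
              * (k : ℝ) * t ^ (4 : ℕ))
      (Ioc (0 : ℝ) ((2 * π) ^ (-(n : ℝ)) * V)) := by
  obtain ⟨hB0, hB2⟩ := ballVol_pos_le n hn
  rw [← hB] at hB0 hB2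
  have hnR : (1 : ℝ) ≤ (n : ℝ) := by exact_mod_cast hn
  have hn0 : (0 : ℝ) < n := by linarith
  have hkR : (1 : ℝ) ≤ (k : ℝ) := by exact_mod_cast hk
  have hk0 : (0 : ℝ) < (k : ℝ) := by linarith
  have hc : (6 : ℝ) ≤ 2 * π := by nlinarith [Real.pi_gt_three]
  have hc0 : (0 : ℝ) < 2 * π := by linarith
  have hn4 : (0 : ℝ) < (n : ℝ) + 4 := by linarith
  set L : ℝ := (2 * π) ^ (-(n : ℝ)) * B ^ (-(1 : ℝ) / n) * V ^ (((n : ℝ) + 1) / n) with hL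
  have hL0 : 0 < L := by
    rw [hL]; positivity
  have hη0 : 0 < η := lt_of_lt_of_le hL0 hη
  apply antitoneAux
  intro t ht htT
  -- exponent identities
  have e2 : t ^ ((2 * (n : ℝ) - 2) / n - 1) = t ^ ((2 * (n : ℝ) + 2) / n) * t ^ (-(4 : ℝ) / n - 1) := by
    rw [← Real.rpow_add ht]
    congr 1
    field_simp
    ring
  have e3 : t ^ (3 : ℕ) = t ^ ((4 * (n : ℝ) + 4) / n) * t ^ (-(4 : ℝ) / n - 1) := by
    rw [← Real.rpow_add ht, ← Real.rpow_natCast t 3]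
    congr 1
    field_simp
    ring
  -- T-power identities
  have hT2 := Tpow n 2 hn0 B V (2 * π) hB0 hV hc0
  have hT4 := Tpow n 4 hn0 B V (2 * π) hB0 hV hc0
  push_cast at hT2 hT4
  rw [← hL] at hT2 hT4
  -- bounds on t-powers
  have ht2 : t ^ ((2 * (n : ℝ) + 2) / n) ≤ L ^ (2 : ℕ) * B ^ ((2 : ℝ) / n) * ((2 * π) ^ (2 : ℕ))⁻¹ := by
    rw [← hT2]
    exact Real.rpow_le_rpow ht.le htT.le (by positivity)
  have ht4 : t ^ ((4 * (n : ℝ) + 4) / n) ≤ L ^ (4 : ℕ) * B ^ ((4 : ℝ) / n) * ((2 * π) ^ (4 : ℕ))⁻¹ := by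
    rw [← hT4]
    exact Real.rpow_le_rpow ht.le htT.le (by positivity)
  -- eta bounds
  have hLp2 : L ^ (2 : ℕ) ≤ η ^ (2 : ℕ) := pow_le_pow_left₀ hL0.le hη 2
  have hLp4 : L ^ (4 : ℕ) ≤ η ^ (4 : ℕ) := pow_le_pow_left₀ hL0.le hη 4
  have r2 : L ^ (2 : ℕ) / η ^ (2 : ℕ) ≤ 1 := div_le_one_of_le₀ hLp2 (by positivity)
  have r4 : L ^ (4 : ℕ) / η ^ (4 : ℕ) ≤ 1 := div_le_one_of_le₀ hLp4 (by positivity)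
  -- B identities
  have hB2id : B ^ (-(2 : ℝ) / n) * B ^ ((2 : ℝ) / n) = 1 := by
    rw [← Real.rpow_add hB0, show -(2 : ℝ) / n + 2 / n = 0 by ring, Real.rpow_zero]
  have hB4inv : B ^ (-(4 : ℝ) / n) = (B ^ ((4 : ℝ) / n))⁻¹ := by
    rw [show -(4 : ℝ) / n = -((4 : ℝ) / n) by ring, Real.rpow_neg hB0.le]
  have hb0' : 0 < B ^ ((4 : ℝ) / n) := Real.rpow_pos_of_pos hB0 _
  have hb16 : B ^ ((4 : ℝ) / n) ≤ 16 := by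
    calc B ^ ((4 : ℝ) / n) ≤ ((2 : ℝ) ^ n) ^ ((4 : ℝ) / n) :=
          Real.rpow_le_rpow hB0.le hB2 (by positivity)
      _ = 16 := by
          rw [← Real.rpow_natCast 2 n, ← Real.rpow_mul (by norm_num : (0:ℝ) ≤ 2),
            show (n : ℝ) * ((4 : ℝ) / n) = 4 by field_simp,
            show (4 : ℝ) = ((4 : ℕ) : ℝ) by norm_num, Real.rpow_natCast]
          norm_num
  -- k identities
  have hkA : (k : ℝ) ^ (((n : ℝ) + 4) / n) = k * (k : ℝ) ^ ((4 : ℝ) / n) := by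
    rw [show ((n : ℝ) + 4) / n = 1 + 4 / n by field_simp, Real.rpow_add hk0, Real.rpow_one]
  have hkC : (k : ℝ) ^ (((n : ℝ) + 2) / n) = k * (k : ℝ) ^ ((2 : ℝ) / n) := by
    rw [show ((n : ℝ) + 2) / n = 1 + 2 / n by field_simp, Real.rpow_add hk0, Real.rpow_one]
  have hK21 : 1 ≤ (k : ℝ) ^ ((2 : ℝ) / n) := by
    calc (1 : ℝ) = (k : ℝ) ^ (0 : ℝ) := (Real.rpow_zero _).symm
      _ ≤ _ := Real.rpow_le_rpow_of_exponent_le hkR (by positivity)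
  have hK24 : (k : ℝ) ^ ((2 : ℝ) / n) ≤ (k : ℝ) ^ ((4 : ℝ) / n) :=
    Real.rpow_le_rpow_of_exponent_le hkR (by gcongr <;> norm_num)
  -- the main coefficient bound
  have hCq0 : 0 ≤ (1 / (3 * ((n : ℝ) + 4) * η ^ (2 : ℕ))) * (k : ℝ) ^ (((n : ℝ) + 2) / n)
      * B ^ (-(2 : ℝ) / n) * ((2 * (n : ℝ) - 2) / n) :=
    mul_nonneg (by positivity) (div_nonneg (by linarith) hn0.le)
  have M : (1 / (3 * ((n : ℝ) + 4) * η ^ (2 : ℕ))) * (k : ℝ) ^ (((n : ℝ) + 2) / n)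
        * B ^ (-(2 : ℝ) / n) * ((2 * (n : ℝ) - 2) / n) * t ^ ((2 * (n : ℝ) + 2) / n)
      + (((n : ℝ) + 2) ^ (2 : ℕ) / (72 * n * ((n : ℝ) + 4) ^ (2 : ℕ) * η ^ (4 : ℕ)))
        * (k : ℝ) * 4 * t ^ ((4 * (n : ℝ) + 4) / n)
      ≤ (n / ((n : ℝ) + 4)) * B ^ (-(4 : ℝ) / n) * (k : ℝ) ^ (((n : ℝ) + 4) / n) * (4 / n) := by
    apply le_trans (add_le_add (mul_le_mul_of_nonneg_left ht2 hCq0)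
      (mul_le_mul_of_nonneg_left ht4 (by positivity)))
    have heq : (1 / (3 * ((n : ℝ) + 4) * η ^ (2 : ℕ))) * (k : ℝ) ^ (((n : ℝ) + 2) / n)
          * B ^ (-(2 : ℝ) / n) * ((2 * (n : ℝ) - 2) / n)
          * (L ^ (2 : ℕ) * B ^ ((2 : ℝ) / n) * ((2 * π) ^ (2 : ℕ))⁻¹)
        + (((n : ℝ) + 2) ^ (2 : ℕ) / (72 * n * ((n : ℝ) + 4) ^ (2 : ℕ) * η ^ (4 : ℕ)))
          * (k : ℝ) * 4 * (L ^ (4 : ℕ) * B ^ ((4 : ℝ) / n) * ((2 * π) ^ (4 : ℕ))⁻¹)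
        = (2 * (n : ℝ) - 2) / n * ((k : ℝ) * (k : ℝ) ^ ((2 : ℝ) / n))
            / (3 * ((n : ℝ) + 4) * (2 * π) ^ (2 : ℕ))
            * ((B ^ (-(2 : ℝ) / n) * B ^ ((2 : ℝ) / n)) * (L ^ (2 : ℕ) / η ^ (2 : ℕ)))
        + (((n : ℝ) + 2) ^ (2 : ℕ) / (18 * (n : ℝ) * ((n : ℝ) + 4) ^ (2 : ℕ) * (2 * π) ^ (4 : ℕ)))
            * ((k : ℝ) * B ^ ((4 : ℝ) / n)) * (L ^ (4 : ℕ) / η ^ (4 : ℕ)) := by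
      rw [hkC]
      field_simp
      ring
    rw [heq, hB2id, one_mul]
    apply le_trans (add_le_add (mul_le_mul_of_nonneg_left r2
      (div_nonneg (mul_nonneg (div_nonneg (by linarith : (0:ℝ) ≤ 2*(n:ℝ)-2) hn0.le)
        (by positivity)) (by positivity)))
      (mul_le_mul_of_nonneg_left r4 (by positivity)))
    rw [mul_one, mul_one, hB4inv, hkA]
    have := numeric (n : ℝ) (2 * π) ((k : ℝ) ^ ((2 : ℝ) / n)) ((k : ℝ) ^ ((4 : ℝ) / n))
      (B ^ ((4 : ℝ) / n)) (k : ℝ) hnR hc hK21 hK24 hb0' hb16 hkR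
    calc (2 * (n : ℝ) - 2) / n * ((k : ℝ) * (k : ℝ) ^ ((2 : ℝ) / n))
            / (3 * ((n : ℝ) + 4) * (2 * π) ^ (2 : ℕ))
        + (((n : ℝ) + 2) ^ (2 : ℕ) / (18 * (n : ℝ) * ((n : ℝ) + 4) ^ (2 : ℕ) * (2 * π) ^ (4 : ℕ)))
            * ((k : ℝ) * B ^ ((4 : ℝ) / n))
        = (2 * (n : ℝ) - 2) / (n : ℝ) * ((k : ℝ) * (k : ℝ) ^ ((2 : ℝ) / n))
            / (3 * ((n : ℝ) + 4) * (2 * π) ^ (2 : ℕ))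
          + (((n : ℝ) + 2) ^ (2 : ℕ) / (18 * (n : ℝ) * ((n : ℝ) + 4) ^ (2 : ℕ) * (2 * π) ^ (4 : ℕ)))
            * ((k : ℝ) * B ^ ((4 : ℝ) / n)) := by ring
      _ ≤ ((n : ℝ) / ((n : ℝ) + 4)) * (B ^ ((4 : ℝ) / n))⁻¹
            * ((k : ℝ) * (k : ℝ) ^ ((4 : ℝ) / n)) * (4 / (n : ℝ)) := this
  -- finish
  have tp0 : (0 : ℝ) < t ^ (-(4 : ℝ) / n - 1) := Real.rpow_pos_of_pos ht _
  rw [e2, e3]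
  calc (n / ((n : ℝ) + 4)) * B ^ (-(4 : ℝ) / n) * (k : ℝ) ^ (((n : ℝ) + 4) / n)
        * (-(4 : ℝ) / n * t ^ (-(4 : ℝ) / n - 1))
      + (1 / (3 * ((n : ℝ) + 4) * η ^ (2 : ℕ))) * (k : ℝ) ^ (((n : ℝ) + 2) / n)
        * B ^ (-(2 : ℝ) / n)
        * ((2 * (n : ℝ) - 2) / n * (t ^ ((2 * (n : ℝ) + 2) / n) * t ^ (-(4 : ℝ) / n - 1)))
      + (((n : ℝ) + 2) ^ (2 : ℕ) / (72 * n * ((n : ℝ) + 4) ^ (2 : ℕ) * η ^ (4 : ℕ)))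
        * (k : ℝ) * (4 * (t ^ ((4 * (n : ℝ) + 4) / n) * t ^ (-(4 : ℝ) / n - 1)))
      = ((1 / (3 * ((n : ℝ) + 4) * η ^ (2 : ℕ))) * (k : ℝ) ^ (((n : ℝ) + 2) / n)
          * B ^ (-(2 : ℝ) / n) * ((2 * (n : ℝ) - 2) / n) * t ^ ((2 * (n : ℝ) + 2) / n)
        + (((n : ℝ) + 2) ^ (2 : ℕ) / (72 * n * ((n : ℝ) + 4) ^ (2 : ℕ) * η ^ (4 : ℕ)))
          * (k : ℝ) * 4 * t ^ ((4 * (n : ℝ) + 4) / n)) * t ^ (-(4 : ℝ) / n - 1)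
        - ((n / ((n : ℝ) + 4)) * B ^ (-(4 : ℝ) / n) * (k : ℝ) ^ (((n : ℝ) + 4) / n) * (4 / n))
          * t ^ (-(4 : ℝ) / n - 1) := by ring
    _ ≤ ((n / ((n : ℝ) + 4)) * B ^ (-(4 : ℝ) / n) * (k : ℝ) ^ (((n : ℝ) + 4) / n) * (4 / n))
          * t ^ (-(4 : ℝ) / n - 1)
        - ((n / ((n : ℝ) + 4)) * B ^ (-(4 : ℝ) / n) * (k : ℝ) ^ (((n : ℝ) + 4) / n) * (4 / n))
          * t ^ (-(4 : ℝ) / n - 1) :=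
        sub_le_sub_right (mul_le_mul_of_nonneg_right M tp0.le) _
    _ = 0 := by ring
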